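/- Let Γ be a countably infinite group and let α be a free continuous action of Γ on a nonempty Polish space X which is generically smooth. Then for every subshift Ω ⊆ ℕ^Γ, the action α admits a Baire measurable Ω-coloring if and only if Ω is nonempty. -/

import Mathlib

open Set Function Topology

namespace DescColor

/-- A set is *Baire measurable* if it differs from an open set by a meager set. -/
def BaireMSet {X : Type*} [TopologicalSpace X] (S : Set X) : Prop :=
  ∃ U : Set X, IsOpen U ∧ IsMeagre (symmDiff S U)

/-- A function is *Baire measurable* if preimages of measurable (Borel) sets are
Baire measurable. -/
def BaireMFun {X Y : Type*} [TopologicalSpace X] [MeasurableSpace Y] (f : X → Y) : Prop :=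
  ∀ B : Set Y, MeasurableSet B → BaireMSet (f ⁻¹' B)

variable {Γ : Type*}

/-- The shift action of `Γ` on colorings `Γ → ℕ`: `(γ · ω)(δ) = ω (δ γ)`. -/
def shift [Group Γ] (γ : Γ) (ω : Γ → ℕ) : Γ → ℕ := fun δ => ω (δ * γ)

/-- A subshift: a closed shift-invariant set of colorings. -/
def IsSubshift [Group Γ] (Ω : Set (Γ → ℕ)) : Prop :=
  IsClosed Ω ∧ ∀ (γ : Γ), ∀ ω ∈ Ω, shift γ ω ∈ Ω

/-- The coding map `π_f(x)(γ) = f (γ • x)`. -/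
def codingMap [Group Γ] {X : Type*} [MulAction Γ X] (f : X → ℕ) (x : X) : Γ → ℕ :=
  fun γ => f (γ • x)

/-- The action of `Γ` on `X` admits a Baire measurable `Ω`-coloring. -/
def HasBMColoring [Group Γ] (X : Type*) [TopologicalSpace X] [MulAction Γ X]
    (Ω : Set (Γ → ℕ)) : Prop :=
  ∃ f : X → ℕ, BaireMFun f ∧ {x : X | codingMap f x ∈ Ω} ∈ residual X

/-- The action of `Γ` on `X` is generically smooth. -/
def GenSmooth (Γ : Type*) [Group Γ] (X : Type*) [TopologicalSpace X] [MulAction Γ X] : Prop :=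
  ∃ f : X → ℝ, BaireMFun f ∧ ∀ x y : X, f x = f y ↔ ∃ γ : Γ, γ • x = y

/-- The shift action of `Γ` on `ℕ^Γ` admits a Baire measurable `Ω`-coloring. -/
def ShiftHasBMColoring (Γ : Type*) [Group Γ] (Ω : Set (Γ → ℕ)) : Prop :=
  ∃ f : (Γ → ℕ) → ℕ, BaireMFun f ∧
    {ω : Γ → ℕ | (fun γ : Γ => f (shift γ ω)) ∈ Ω} ∈ residual (Γ → ℕ)

/-- A free continuous action of `Γ` on a Polish space. -/
structure FreePolishAction (Γ : Type*) [Group Γ] where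
  X : Type
  ts : TopologicalSpace X
  polish : @PolishSpace X ts
  smul : Γ → X → X
  one_smul' : ∀ x, smul 1 x = x
  mul_smul' : ∀ γ δ x, smul (γ * δ) x = smul γ (smul δ x)
  cont : ∀ γ : Γ, @Continuous X X ts ts (smul γ)
  free : ∀ (γ : Γ) (x : X), smul γ x = x → γ = 1

/-- A free continuous action on a Polish space admits a Baire measurable `Ω`-coloring. -/
def FreePolishAction.HasBMCol [Group Γ] (α : FreePolishAction Γ) (Ω : Set (Γ → ℕ)) : Prop :=
  letI := α.ts
  ∃ f : α.X → ℕ, BaireMFun f ∧ {x : α.X | (fun γ : Γ => f (α.smul γ x)) ∈ Ω} ∈ residual α.X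

/-- A free continuous action on a Polish space is generically smooth. -/
def FreePolishAction.IsGenSmooth [Group Γ] (α : FreePolishAction Γ) : Prop :=
  letI := α.ts
  ∃ f : α.X → ℝ, BaireMFun f ∧ ∀ x y : α.X, f x = f y ↔ ∃ γ : Γ, α.smul γ x = y

/-- A subshift is *hard* if every free continuous action of `Γ` on a Polish space that
admits a Baire measurable `Ω`-coloring is generically smooth. -/
def Hard (Γ : Type*) [Group Γ] (Ω : Set (Γ → ℕ)) : Prop :=
  ∀ α : FreePolishAction Γ, α.HasBMCol Ω → α.IsGenSmooth

/-- A subshift is *easy* if every free continuous action of `Γ` on a Polish space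
admits a Baire measurable `Ω`-coloring. -/
def Easy (Γ : Type*) [Group Γ] (Ω : Set (Γ → ℕ)) : Prop :=
  ∀ α : FreePolishAction Γ, α.HasBMCol Ω

/-- Finite partial colorings of `Γ`: partial maps `Γ ⇀ ℕ` with finite domain. -/
abbrev FPC (Γ : Type*) : Type _ := {φ : Γ → Option ℕ // {γ : Γ | φ γ ≠ none}.Finite}

/-- The domain of a finite partial coloring. -/
def domP (φ : FPC Γ) : Set Γ := {γ : Γ | φ.1 γ ≠ none}

/-- `Fin(Ω)`: the set of finite partial colorings extending to an element of `Ω`. -/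
def FinOf (Ω : Set (Γ → ℕ)) : Set (FPC Γ) :=
  {φ | ∃ ω ∈ Ω, ∀ (γ : Γ) (c : ℕ), φ.1 γ = some c → ω γ = c}

/-- `g : FPC Γ → Bool` codes (the set `Fin(Ω)` of) the subshift `Ω`. -/
def CodesSubshift [Group Γ] (g : FPC Γ → Bool) (Ω : Set (Γ → ℕ)) : Prop :=
  IsSubshift Ω ∧ ∀ φ : FPC Γ, g φ = true ↔ φ ∈ FinOf Ω

/-- The shift action of `Γ` on finite partial colorings: `(γ · φ)(δ) = φ(δγ)`. -/
def shiftP [Group Γ] (γ : Γ) (φ : FPC Γ) : FPC Γ :=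
  ⟨fun δ => φ.1 (δ * γ), by
    apply (φ.2.image fun δ => δ * γ⁻¹).subset
    intro δ hδ
    exact ⟨δ * γ, hδ, by simp⟩⟩

/-- The empty partial coloring. -/
def emptyP (Γ : Type*) : FPC Γ := ⟨fun _ => none, by simp⟩

/-- The union (join) of two partial colorings (values of `φ` take precedence). -/
def joinP (φ ψ : FPC Γ) : FPC Γ :=
  ⟨fun δ => match φ.1 δ with | some c => some c | none => ψ.1 δ, by
    apply (φ.2.union ψ.2).subset
    intro δ hδ
    by_cases h : φ.1 δ = none
    · right
      simp only [mem_setOf_eq, h] at hδ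
      exact hδ
    · exact Or.inl h⟩

/-- The union of a finite list of partial colorings. -/
def joinList (l : List (FPC Γ)) : FPC Γ := l.foldr joinP (emptyP Γ)

/-- `φ[γ, r]`: the restriction of `φ` to the closed ball `B(γ, r)`. -/
noncomputable def restrictBall [MetricSpace Γ] (φ : FPC Γ) (γ : Γ) (r : ℝ) : FPC Γ :=
  ⟨fun δ => if dist γ δ ≤ r then φ.1 δ else none, by
    apply φ.2.subset
    intro δ hδ
    by_cases h : dist γ δ ≤ r
    · simp only [mem_setOf_eq, if_pos h] at hδ
      exact hδ
    · simp only [mem_setOf_eq, if_neg h] at hδ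
      exact absurd rfl hδ⟩

/-- `φ ∪ {(γ, c)}`. -/
def insertP [DecidableEq Γ] (φ : FPC Γ) (γ : Γ) (c : ℕ) : FPC Γ :=
  ⟨fun δ => if δ = γ then some c else φ.1 δ, by
    apply (φ.2.insert γ).subset
    intro δ hδ
    by_cases h : δ = γ
    · exact Or.inl h
    · right
      simp only [mem_setOf_eq, if_neg h] at hδ
      exact hδ⟩

/-- The restriction of a total coloring `ω` to a finite set `S`. -/
def restrictTo [DecidableEq Γ] (ω : Γ → ℕ) (S : Finset Γ) : FPC Γ :=
  ⟨fun δ => if δ ∈ S then some (ω δ) else none, by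
    apply S.finite_toSet.subset
    intro δ hδ
    by_cases h : δ ∈ S
    · exact h
    · simp only [mem_setOf_eq, if_neg h] at hδ
      exact absurd rfl hδ⟩

/-- Post-composition of a partial coloring with `ρ : ℕ → ℕ`. -/
def mapP (ρ : ℕ → ℕ) (φ : FPC Γ) : FPC Γ :=
  ⟨fun δ => (φ.1 δ).map ρ, by
    apply φ.2.subset
    intro δ hδ
    intro h
    simp only [mem_setOf_eq, h] at hδ
    exact hδ rfl⟩

/-- `ψ` is a restriction of `φ`. -/
def IsRestrictionOf (ψ φ : FPC Γ) : Prop := ∀ δ : Γ, ψ.1 δ = none ∨ ψ.1 δ = φ.1 δ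

/-- A `Γ`-ideal: a shift-invariant set of finite partial colorings closed under
restrictions. -/
def IsGammaIdeal [Group Γ] (P : Set (FPC Γ)) : Prop :=
  (∀ (γ : Γ), ∀ φ ∈ P, shiftP γ φ ∈ P) ∧
  (∀ φ ∈ P, ∀ ψ : FPC Γ, IsRestrictionOf ψ φ → ψ ∈ P)

/-- An extendable `Γ`-ideal. -/
def IsExtendable [DecidableEq Γ] (P : Set (FPC Γ)) : Prop :=
  ∀ φ ∈ P, ∀ γ : Γ, φ.1 γ = none → ∃ c : ℕ, insertP φ γ c ∈ P

/-- `φ` and `ψ` are `R`-separated: `dist(dom φ, dom ψ) > R φ + R ψ`. -/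
def RSeparated [MetricSpace Γ] (R : FPC Γ → ℝ) (φ ψ : FPC Γ) : Prop :=
  ∀ γ ∈ domP φ, ∀ δ ∈ domP ψ, R φ + R ψ < dist γ δ

/-- The join property of a `Γ`-ideal `P`. -/
def HasJoinProperty [Group Γ] [MetricSpace Γ] (P : Set (FPC Γ)) : Prop :=
  ∃ R : FPC Γ → ℝ, (∀ φ, 0 ≤ R φ) ∧ (∀ (γ : Γ), ∀ φ ∈ P, R (shiftP γ φ) = R φ) ∧
    ∀ l : List (FPC Γ), (∀ φ ∈ l, φ ∈ P) → l.Pairwise (RSeparated R) → joinList l ∈ P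

/-- `P^loc_r`: partial colorings that are `r`-locally in `P`. -/
def LocallyIn [MetricSpace Γ] (P : Set (FPC Γ)) (r : ℕ → ℝ) : Set (FPC Γ) :=
  {φ | ∀ (γ : Γ) (c : ℕ), φ.1 γ = some c → restrictBall φ γ (r c) ∈ P}

/-- A local `Γ`-ideal. -/
def IsLocal [MetricSpace Γ] (P : Set (FPC Γ)) : Prop :=
  ∃ r : ℕ → ℝ, (∀ c, 0 ≤ r c) ∧ P = LocallyIn P r

/-- `Col(P)`: colorings all of whose finite restrictions lie in `P`. -/
def ColOf [DecidableEq Γ] (P : Set (FPC Γ)) : Set (Γ → ℕ) :=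
  {ω | ∀ S : Finset Γ, restrictTo ω S ∈ P}

/-! ### The space of Baire measurable functions -/

/-- Baire measurable functions from `X` to `Y`. -/
abbrev BMFunSub (X Y : Type*) [TopologicalSpace X] [MeasurableSpace Y] :=
  {f : X → Y // BaireMFun f}

/-- Equality on a comeager set. -/
def BFunRel {X Y : Type*} [TopologicalSpace X] [MeasurableSpace Y]
    (f g : BMFunSub X Y) : Prop := {x : X | f.1 x = g.1 x} ∈ residual X

/-- `B(X,Y)`: Baire measurable functions modulo equality on a comeager set. -/
abbrev BFun (X Y : Type*) [TopologicalSpace X] [MeasurableSpace Y] :=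
  Quot (BFunRel (X := X) (Y := Y))

/-- `[U, A]`: the classes of functions `f` with `U ∖ f⁻¹(A)` meager. -/
def forceSet {X Y : Type*} [TopologicalSpace X] [MeasurableSpace Y]
    (U : Set X) (A : Set Y) : Set (BFun X Y) :=
  {F | ∃ f : BMFunSub X Y, Quot.mk BFunRel f = F ∧ IsMeagre (U \ f.1 ⁻¹' A)}

/-- `Σ(X,Y)`: the σ-algebra generated by the sets `[U, A]` for `U` nonempty open
and `A` Borel. -/
def SigmaXY (X Y : Type*) [TopologicalSpace X] [MeasurableSpace Y] :
    MeasurableSpace (BFun X Y) :=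
  MeasurableSpace.generateFrom
    {S | ∃ (U : Set X) (A : Set Y), IsOpen U ∧ U.Nonempty ∧ MeasurableSet A ∧ S = forceSet U A}

section AuxProofs

open Filter Metric

private lemma isMeagre_symmDiff_iff {X : Type*} [TopologicalSpace X] (S U : Set X) :
    IsMeagre (symmDiff S U) ↔ S =ᵇ U := by
  have h : (symmDiff S U)ᶜ = {x | x ∈ S ↔ x ∈ U} := by
    ext x
    simp only [Set.mem_compl_iff, Set.mem_symmDiff, Set.mem_setOf_eq]
    tauto
  rw [Filter.eventuallyEq_set]
  show (symmDiff S U)ᶜ ∈ residual X ↔ _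
  rw [h]
  rfl

private lemma baireMSet_iff {X : Type*} [TopologicalSpace X] {S : Set X} :
    BaireMSet S ↔ BaireMeasurableSet S := by
  constructor
  · rintro ⟨U, hU, hm⟩
    exact hU.baireMeasurableSet.congr ((isMeagre_symmDiff_iff S U).mp hm).symm
  · intro h
    obtain ⟨U, hU, he⟩ := h.residualEq_isOpen
    exact ⟨U, hU, (isMeagre_symmDiff_iff S U).mpr he⟩

private lemma exists_isMeagre_continuousOn {X : Type*} [TopologicalSpace X] {g : X → ℝ}
    (hg : BaireMFun g) : ∃ M : Set X, IsMeagre M ∧ ContinuousOn g Mᶜ := by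
  classical
  obtain ⟨bR, hbRc, -, hbR⟩ := TopologicalSpace.exists_countable_basis ℝ
  have hbRc' : Countable bR := hbRc.to_subtype
  have hh : ∀ W : bR, ∃ O : Set X, IsOpen O ∧ IsMeagre (symmDiff (g ⁻¹' (W : Set ℝ)) O) :=
    fun W => hg _ (hbR.isOpen W.2).measurableSet
  choose O hOopen hOmeag using hh
  refine ⟨⋃ W : bR, symmDiff (g ⁻¹' (W : Set ℝ)) (O W), ?_, ?_⟩
  · show (⋃ W : bR, _)ᶜ ∈ residual X
    rw [Set.compl_iUnion]
    exact (countable_iInter_mem).mpr fun W => hOmeag W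
  · intro x hx
    rw [ContinuousWithinAt, Filter.tendsto_def]
    intro N hN
    obtain ⟨t, htN, hto, hxt⟩ := _root_.mem_nhds_iff.mp hN
    obtain ⟨W, hWb, hxW, hWt⟩ := hbR.exists_subset_of_mem_open hxt hto
    have hxM : ∀ W' : bR, x ∉ symmDiff (g ⁻¹' (W' : Set ℝ)) (O W') := by
      intro W' hmem
      exact hx (Set.mem_iUnion.mpr ⟨W', hmem⟩)
    have hxO : x ∈ O ⟨W, hWb⟩ := by
      by_contra hc
      exact hxM ⟨W, hWb⟩ (Set.mem_symmDiff.mpr (Or.inl ⟨hxW, hc⟩))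
    refine mem_nhdsWithin.mpr ⟨O ⟨W, hWb⟩, hOopen _, hxO, ?_⟩
    rintro z ⟨hzO, hzc⟩
    by_cases hzW : g z ∈ W
    · exact htN (hWt hzW)
    · exact (hzc (Set.mem_iUnion.mpr
        ⟨⟨W, hWb⟩, Set.mem_symmDiff.mpr (Or.inr ⟨hzO, hzW⟩)⟩)).elim

private lemma find_congr' {P Q : ℕ → Prop} [DecidablePred P] [DecidablePred Q]
    (h : ∃ n, P n) (h' : ∃ n, Q n) (hPQ : ∀ n, P n ↔ Q n) : Nat.find h = Nat.find h' :=
  le_antisymm (Nat.find_le ((hPQ _).mpr (Nat.find_spec h')))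
    (Nat.find_le ((hPQ _).mp (Nat.find_spec h)))

private lemma exists_isolated_rel {X : Type*} [MetricSpace X] [CompleteSpace X]
    (U : ℕ → Set X) (hU : ∀ n, IsOpen (U n)) (F : Set X)
    (hFU : ∀ n, F ⊆ U n)
    (hcl : ∀ z, z ∈ closure F → (∀ n, z ∈ U n) → z ∈ F)
    (hct : F.Countable) (hne : F.Nonempty) :
    ∃ y ∈ F, ∃ W : Set X, IsOpen W ∧ W ∩ F = {y} := by
  classical
  by_contra hcon
  push_neg at hcon
  obtain ⟨y, hyF⟩ := hct.exists_eq_range hne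
  have hstep : ∀ (p : X), p ∈ F → ∀ W : Set X, IsOpen W → p ∈ W →
      ∃ z, z ∈ W ∩ F ∧ z ≠ p := by
    intro p hp W hW hpW
    have hsub : {p} ⊆ W ∩ F := Set.singleton_subset_iff.mpr ⟨hpW, hp⟩
    have hss : {p} ⊂ W ∩ F := by
      refine ⟨hsub, fun hsub' => ?_⟩
      exact hcon p hp W hW (Set.Subset.antisymm hsub' hsub)
    obtain ⟨z, hz1, hz2⟩ := Set.exists_of_ssubset hss
    exact ⟨z, hz1, fun h => hz2 (h ▸ rfl)⟩
  have key : ∀ (n : ℕ) (p : X) (r : ℝ), p ∈ F → 0 < r →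
      ∃ q : X, ∃ s : ℝ, q ∈ F ∧ 0 < s ∧ s ≤ (1/2 : ℝ) ^ (n+1) ∧
        closedBall q s ⊆ ball p r ∧ closedBall q s ⊆ U (n+1) ∧ y n ∉ closedBall q s := by
    intro n p r hp hr
    have hWo : IsOpen (ball p r ∩ U (n+1)) := isOpen_ball.inter (hU (n+1))
    have hpW : p ∈ ball p r ∩ U (n+1) := ⟨mem_ball_self hr, hFU (n+1) hp⟩
    obtain ⟨z, ⟨hzW, hzF⟩, hzp⟩ := hstep p hp _ hWo hpW
    by_cases hpy : p = y n
    case pos =>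
      -- use z
      obtain ⟨ε, hε, hεW⟩ := Metric.isOpen_iff.mp hWo z hzW
      have hd : (0:ℝ) < dist z (y n) := dist_pos.mpr (by rw [← hpy]; exact hzp)
      refine ⟨z, min (ε/2) (min ((1/2:ℝ)^(n+1)) (dist z (y n) / 2)), hzF,
        lt_min (by linarith) (lt_min (by positivity) (by linarith)),
        (min_le_right _ _).trans (min_le_left _ _), ?_, ?_, ?_⟩
      · exact (closedBall_subset_ball (lt_of_le_of_lt (min_le_left _ _) (by linarith))).trans
          (hεW.trans Set.inter_subset_left)
      · exact (closedBall_subset_ball (lt_of_le_of_lt (min_le_left _ _) (by linarith))).trans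
          (hεW.trans Set.inter_subset_right)
      · intro hmem
        have h1 : dist (y n) z ≤ min (ε/2) (min ((1/2:ℝ)^(n+1)) (dist z (y n) / 2)) :=
          mem_closedBall.mp hmem
        have h2 := h1.trans ((min_le_right (ε/2) _).trans
          (min_le_right ((1/2:ℝ)^(n+1)) (dist z (y n) / 2)))
        rw [dist_comm] at h2
        linarith
    case neg =>
      obtain ⟨ε, hε, hεW⟩ := Metric.isOpen_iff.mp hWo p hpW
      have hd : (0:ℝ) < dist p (y n) := dist_pos.mpr hpy
      refine ⟨p, min (ε/2) (min ((1/2:ℝ)^(n+1)) (dist p (y n) / 2)), hp,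
        lt_min (by linarith) (lt_min (by positivity) (by linarith)),
        (min_le_right _ _).trans (min_le_left _ _), ?_, ?_, ?_⟩
      · exact (closedBall_subset_ball (lt_of_le_of_lt (min_le_left _ _) (by linarith))).trans
          (hεW.trans Set.inter_subset_left)
      · exact (closedBall_subset_ball (lt_of_le_of_lt (min_le_left _ _) (by linarith))).trans
          (hεW.trans Set.inter_subset_right)
      · intro hmem
        have h1 : dist (y n) p ≤ min (ε/2) (min ((1/2:ℝ)^(n+1)) (dist p (y n) / 2)) :=
          mem_closedBall.mp hmem
        have h2 := h1.trans ((min_le_right (ε/2) _).trans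
          (min_le_right ((1/2:ℝ)^(n+1)) (dist p (y n) / 2)))
        rw [dist_comm] at h2
        linarith
  choose! q s hqF hs0 hsle hsub hsubU havoid using key
  obtain ⟨p₀, hp₀⟩ := hne
  obtain ⟨ε₀, hε₀, hε₀U⟩ := Metric.isOpen_iff.mp (hU 0) p₀ (hFU 0 hp₀)
  set r₀ := min (ε₀/2) 1 with hr₀
  have hr₀0 : 0 < r₀ := lt_min (by linarith) one_pos
  have hr₀1 : r₀ ≤ (1/2:ℝ)^(0:ℕ) := by
    rw [pow_zero]; exact min_le_right _ _
  have hball₀ : closedBall p₀ r₀ ⊆ U 0 :=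
    (closedBall_subset_ball (lt_of_le_of_lt (min_le_left _ _) (by linarith))).trans hε₀U
  set seq : ℕ → X × ℝ :=
    fun n => Nat.rec (p₀, r₀) (fun n pr => (q n pr.1 pr.2, s n pr.1 pr.2)) n with hseq
  have hseqS : ∀ n, seq (n+1) = (q n (seq n).1 (seq n).2, s n (seq n).1 (seq n).2) :=
    fun n => rfl
  have inv : ∀ n, (seq n).1 ∈ F ∧ 0 < (seq n).2 ∧ (seq n).2 ≤ (1/2:ℝ)^n := by
    intro n
    induction n with
    | zero => exact ⟨hp₀, hr₀0, hr₀1⟩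
    | succ n ih =>
      rw [hseqS n]
      exact ⟨hqF n _ _ ih.1 ih.2.1, hs0 n _ _ ih.1 ih.2.1, hsle n _ _ ih.1 ih.2.1⟩
  have nest : ∀ n, closedBall (seq (n+1)).1 (seq (n+1)).2 ⊆ closedBall (seq n).1 (seq n).2 := by
    intro n
    rw [hseqS n]
    exact (hsub n _ _ (inv n).1 (inv n).2.1).trans ball_subset_closedBall
  have mono : ∀ m n, m ≤ n →
      closedBall (seq n).1 (seq n).2 ⊆ closedBall (seq m).1 (seq m).2 := by
    intro m n h
    induction h with
    | refl => exact subset_rfl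
    | step _ ih => exact (nest _).trans ih
  have hcauchy : CauchySeq (fun n => (seq n).1) := by
    apply cauchySeq_of_le_geometric (1/2 : ℝ) 1 (by norm_num)
    intro n
    have h1 : (seq (n+1)).1 ∈ closedBall (seq n).1 (seq n).2 :=
      nest n (mem_closedBall_self (inv (n+1)).2.1.le)
    calc dist (seq n).1 (seq (n+1)).1 = dist (seq (n+1)).1 (seq n).1 := dist_comm _ _
      _ ≤ (seq n).2 := mem_closedBall.mp h1
      _ ≤ (1/2:ℝ)^n := (inv n).2.2
      _ = 1 * (1/2:ℝ)^n := (one_mul _).symm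
  obtain ⟨z, hz⟩ := cauchySeq_tendsto_of_complete hcauchy
  have hzball : ∀ m, z ∈ closedBall (seq m).1 (seq m).2 := by
    intro m
    apply isClosed_closedBall.mem_of_tendsto hz
    filter_upwards [Filter.eventually_ge_atTop m] with n hn
    exact mono m n hn (mem_closedBall_self (inv n).2.1.le)
  have hzU : ∀ n, z ∈ U n := by
    intro n
    cases n with
    | zero => exact hball₀ (hzball 0)
    | succ n =>
      have h := hzball (n+1)
      rw [hseqS n] at h
      exact hsubU n _ _ (inv n).1 (inv n).2.1 h
  have hzF : z ∈ F :=
    hcl z (mem_closure_of_tendsto hz (Filter.Eventually.of_forall fun n => (inv n).1)) hzU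
  rw [hyF] at hzF
  obtain ⟨k, hk⟩ := hzF
  have h := hzball (k+1)
  rw [hseqS k] at h
  exact havoid k _ _ (inv k).1 (inv k).2.1 (hk ▸ h)

/-- If a free continuous action of a countably infinite group `Γ` on a nonempty Polish
space is generically smooth, then it admits a Baire measurable `Ω`-coloring for a
subshift `Ω` if and only if `Ω` is nonempty. -/
theorem stmt0 {Γ : Type*} [Group Γ] [Countable Γ] [Infinite Γ]
    (X : Type*) [TopologicalSpace X] [PolishSpace X] [Nonempty X] [MulAction Γ X]
    (hcont : ∀ γ : Γ, Continuous fun x : X => γ • x)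
    (hfree : ∀ (γ : Γ) (x : X), γ • x = x → γ = 1)
    (hsmooth : GenSmooth Γ X)
    (Ω : Set (Γ → ℕ)) (hΩ : IsSubshift Ω) :
    HasBMColoring X Ω ↔ Ω.Nonempty := by
  classical
  letI := TopologicalSpace.upgradeIsCompletelyMetrizable X
  constructor
  · rintro ⟨f, -, hres⟩
    obtain ⟨x, hx⟩ := (dense_of_mem_residual hres).nonempty
    exact ⟨codingMap f x, hx⟩
  · rintro ⟨ω, hω⟩
    -- free-action cancellation
    have hcancel : ∀ (γ δ : Γ) (x : X), γ • x = δ • x → γ = δ := by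
      intro γ δ x h
      have h2 : (δ⁻¹ * γ) • x = x := by
        rw [mul_smul, h, ← mul_smul, inv_mul_cancel, one_smul]
      exact (inv_mul_eq_one.mp (hfree _ x h2)).symm
    have hhomeo : ∀ γ : Γ, IsOpenMap (fun x : X => γ • x) := by
      intro γ
      exact (Homeomorph.mk ⟨fun x => γ • x, fun x => γ⁻¹ • x,
        fun x => by simp [← mul_smul], fun x => by simp [← mul_smul]⟩
        (hcont γ) (hcont γ⁻¹)).isOpenMap
    obtain ⟨g, hgbm, hgsep⟩ := hsmooth
    obtain ⟨M, hMmea, hgc⟩ := exists_isMeagre_continuousOn hgbm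
    have hMres : Mᶜ ∈ residual X := hMmea
    obtain ⟨D, hDsub, hDGδ, hDdense⟩ := mem_residual.mp hMres
    obtain ⟨T, hTo, hTc, hTeq⟩ := hDGδ
    obtain ⟨u, hu⟩ := (hTc.insert Set.univ).exists_eq_range (Set.insert_nonempty _ _)
    have hu_open : ∀ n, IsOpen (u n) := by
      intro n
      have h : u n ∈ insert Set.univ T := by rw [hu]; exact ⟨n, rfl⟩
      rcases h with h | h
      · rw [h]; exact isOpen_univ
      · exact hTo _ h
    have hDeq : D = ⋂ n, u n := by
      rw [hTeq, ← Set.sInter_range, ← hu, Set.sInter_insert, Set.univ_inter]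
    obtain ⟨e, he⟩ := exists_surjective_nat (Γ × ℕ)
    set Wf : ℕ → Set X := fun k => (fun x => (e k).1 • x) ⁻¹' u (e k).2 with hWf
    have hWfopen : ∀ k, IsOpen (Wf k) := fun k => (hu_open _).preimage (hcont _)
    set C := ⋂ k, Wf k with hC
    have hCiff : ∀ x : X, x ∈ C ↔ ∀ (γ : Γ) (n : ℕ), γ • x ∈ u n := by
      intro x
      rw [hC, Set.mem_iInter]
      constructor
      · intro h γ n
        obtain ⟨k, hk⟩ := he (γ, n)
        have h2 := h k
        rw [hWf] at h2
        simp only [Set.mem_preimage, hk] at h2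
        exact h2
      · intro h k
        rw [hWf]
        exact h (e k).1 (e k).2
    have hCres : C ∈ residual X := by
      rw [hC]
      refine (countable_iInter_mem).mpr fun k => ?_
      have hdense : Dense (u (e k).2) := by
        apply hDdense.mono
        rw [hDeq]
        exact Set.iInter_subset u _
      have hres : u (e k).2 ∈ residual X := residual_of_dense_open (hu_open _) hdense
      exact Filter.mem_map.mp
        ((tendsto_residual_of_isOpenMap (hcont (e k).1) (hhomeo (e k).1)) hres)
    have hCinv : ∀ (δ : Γ) (x : X), x ∈ C → δ • x ∈ C := by
      intro δ x hx
      rw [hCiff] at hx ⊢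
      intro γ n
      have h := hx (γ * δ) n
      rwa [mul_smul] at h
    have hCD : C ⊆ D := by
      intro x hx
      rw [hDeq, Set.mem_iInter]
      intro n
      have h := (hCiff x).mp hx 1 n
      rwa [one_smul] at h
    have hCM : C ⊆ Mᶜ := fun x hx => hDsub (hCD hx)
    -- orbits
    set orb : X → Set X := fun x => Set.range fun γ : Γ => γ • x with horb
    have horbC : ∀ x, x ∈ C → orb x ⊆ C := by
      rintro x hx w ⟨γ, rfl⟩
      exact hCinv γ x hx
    have hgconst : ∀ (x : X) (γ : Γ), g x = g (γ • x) :=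
      fun x γ => (hgsep x (γ • x)).mpr ⟨γ, rfl⟩
    have horb_smul : ∀ (δ : Γ) (x : X), orb (δ • x) = orb x := by
      intro δ x
      ext z
      simp only [horb, Set.mem_range]
      constructor
      · rintro ⟨γ, rfl⟩
        exact ⟨γ * δ, by rw [mul_smul]⟩
      · rintro ⟨γ, rfl⟩
        exact ⟨γ * δ⁻¹, by rw [← mul_smul, inv_mul_cancel_right]⟩
    -- orbits are relatively closed in C
    have hclosed : ∀ x, x ∈ C → ∀ z, z ∈ closure (orb x) → z ∈ C → z ∈ orb x := by
      intro x hx z hzc hzC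
      have horbsub : orb x ⊆ Mᶜ := fun w hw => hCM (horbC x hx hw)
      have hcw : ContinuousWithinAt g (orb x) z := (hgc z (hCM hzC)).mono horbsub
      have hne' : (𝓝[orb x] z).NeBot := mem_closure_iff_nhdsWithin_neBot.mp hzc
      have heq : (fun _ : X => g x) =ᶠ[𝓝[orb x] z] g :=
        eventuallyEq_of_mem self_mem_nhdsWithin
          (fun w hw => by obtain ⟨γ, rfl⟩ := hw; exact hgconst x γ)
      have hconst : Tendsto g (𝓝[orb x] z) (𝓝 (g x)) :=
        Filter.Tendsto.congr' heq tendsto_const_nhds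
      have hgz : g z = g x := tendsto_nhds_unique hcw hconst
      obtain ⟨γ, hγ⟩ := (hgsep x z).mp hgz.symm
      exact ⟨γ, hγ⟩
    -- countable basis of X
    obtain ⟨b, hbc, hbne, hbasis⟩ := TopologicalSpace.exists_countable_basis X
    obtain ⟨v0, hv0, -, -⟩ :=
      hbasis.exists_subset_of_mem_open (Set.mem_univ (Classical.arbitrary X)) isOpen_univ
    obtain ⟨V, hV⟩ := hbc.exists_eq_range ⟨v0, hv0⟩
    have hVopen : ∀ n, IsOpen (V n) := fun n => hbasis.isOpen (by rw [hV]; exact ⟨n, rfl⟩)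
    -- the Borel witness sets
    set E : ℕ → Set X := fun n => ⋃ γ : Γ, ((fun x => γ • x) ⁻¹' V n ∩
        ⋂ δ : Γ, ⋂ _ : δ ≠ γ, ((fun x => δ • x) ⁻¹' V n)ᶜ) with hEdef
    have hEmem : ∀ (n : ℕ) (x : X), x ∈ E n ↔ ∃ yy, V n ∩ orb x = {yy} := by
      intro n x
      constructor
      · intro hx
        rw [hEdef] at hx
        simp only [Set.mem_iUnion, Set.mem_inter_iff, Set.mem_preimage, Set.mem_iInter,
          Set.mem_compl_iff] at hx
        obtain ⟨γ, hγ, huniq⟩ := hx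
        refine ⟨γ • x, ?_⟩
        ext z
        simp only [Set.mem_inter_iff, horb, Set.mem_range, Set.mem_singleton_iff]
        constructor
        · rintro ⟨hzV, δ, rfl⟩
          by_cases hδ : δ = γ
          · rw [hδ]
          · exact absurd hzV (huniq δ hδ)
        · rintro rfl
          exact ⟨hγ, γ, rfl⟩
      · rintro ⟨yy, hyy⟩
        have hyy' : yy ∈ V n ∩ orb x := by rw [hyy]; rfl
        obtain ⟨hyV, γ, hγ0⟩ := hyy'
        have hγ : γ • x = yy := hγ0
        rw [hEdef]
        simp only [Set.mem_iUnion, Set.mem_inter_iff, Set.mem_preimage, Set.mem_iInter,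
          Set.mem_compl_iff]
        refine ⟨γ, by rw [hγ]; exact hyV, fun δ hδ hmem => ?_⟩
        have h2 : δ • x ∈ V n ∩ orb x := ⟨hmem, δ, rfl⟩
        rw [hyy, Set.mem_singleton_iff, ← hγ] at h2
        exact hδ (hcancel δ γ x h2)
    have hexE : ∀ x, x ∈ C → ∃ n, x ∈ E n := by
      intro x hx
      obtain ⟨yy, hyyF, W, hWo, hWF⟩ := exists_isolated_rel Wf hWfopen (orb x)
        (fun k => (horbC x hx).trans (by rw [hC]; exact Set.iInter_subset Wf k))
        (fun z hz1 hz2 => hclosed x hx z hz1 (by rw [hC]; exact Set.mem_iInter.mpr hz2))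
        (Set.countable_range _) ⟨x, 1, one_smul Γ x⟩
      have hyyW : yy ∈ W ∩ orb x := by rw [hWF]; rfl
      obtain ⟨v, hvb, hyv, hvW⟩ := hbasis.exists_subset_of_mem_open hyyW.1 hWo
      rw [hV] at hvb
      obtain ⟨n, rfl⟩ := hvb
      refine ⟨n, (hEmem n x).mpr ⟨yy, ?_⟩⟩
      apply Set.Subset.antisymm
      · intro z hz
        rw [← hWF]
        exact ⟨hvW hz.1, hz.2⟩
      · intro z hz
        rw [Set.mem_singleton_iff] at hz
        subst hz
        exact ⟨hyv, hyyW.2⟩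
    -- selectors
    set nsel : X → ℕ := fun x => if h : ∃ n, x ∈ E n then Nat.find h else 0 with hnsel
    have hnself : ∀ (x : X) (h : ∃ n, x ∈ E n),
        x ∈ E (nsel x) ∧ ∀ m, m < nsel x → x ∉ E m := by
      intro x h
      have hx : nsel x = Nat.find h := by rw [hnsel]; exact dif_pos h
      rw [hx]
      exact ⟨Nat.find_spec h, fun m hm => Nat.find_min h hm⟩
    have hnsel_smul : ∀ x, x ∈ C → ∀ δ : Γ, nsel (δ • x) = nsel x := by
      intro x hx δ
      have hPQ : ∀ n, (δ • x ∈ E n) ↔ (x ∈ E n) := by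
        intro n
        rw [hEmem, hEmem, horb_smul]
      have h : ∃ n, x ∈ E n := hexE x hx
      have h' : ∃ n, δ • x ∈ E n := ⟨h.choose, (hPQ _).mpr h.choose_spec⟩
      rw [hnsel]
      simp only
      rw [dif_pos h', dif_pos h]
      exact find_congr' h' h hPQ
    set gsel : X → Γ := fun x => if h : ∃ γ : Γ, γ • x ∈ V (nsel x) then h.choose else 1
      with hgseldef
    have hgsel_mem : ∀ x, x ∈ C →
        gsel x • x ∈ V (nsel x) ∧ ∀ γ : Γ, γ • x ∈ V (nsel x) → γ = gsel x := by
      intro x hx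
      obtain ⟨hxE, -⟩ := hnself x (hexE x hx)
      obtain ⟨yy, hyy⟩ := (hEmem _ x).mp hxE
      have hyy2 : yy ∈ V (nsel x) ∩ orb x := by rw [hyy]; rfl
      obtain ⟨hyV, γ₀, hγ₀0⟩ := hyy2
      have hγ₀ : γ₀ • x = yy := hγ₀0
      have hex2 : ∃ γ : Γ, γ • x ∈ V (nsel x) := ⟨γ₀, by rw [hγ₀]; exact hyV⟩
      have hgx : gsel x = hex2.choose := by rw [hgseldef]; exact dif_pos hex2
      have hmem : gsel x • x ∈ V (nsel x) := by rw [hgx]; exact hex2.choose_spec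
      refine ⟨hmem, fun γ hγ => ?_⟩
      have h1 : γ • x = yy := by
        have h : γ • x ∈ V (nsel x) ∩ orb x := ⟨hγ, γ, rfl⟩
        rw [hyy, Set.mem_singleton_iff] at h
        exact h
      have h2 : gsel x • x = yy := by
        have h : gsel x • x ∈ V (nsel x) ∩ orb x := ⟨hmem, gsel x, rfl⟩
        rw [hyy, Set.mem_singleton_iff] at h
        exact h
      exact hcancel γ (gsel x) x (h1.trans h2.symm)
    have hgsel_smul : ∀ x, x ∈ C → ∀ δ : Γ, gsel (δ • x) = gsel x * δ⁻¹ := by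
      intro x hx δ
      have hδx : δ • x ∈ C := hCinv δ x hx
      have h1 := (hgsel_mem (δ • x) hδx).1
      rw [hnsel_smul x hx δ] at h1
      have h2 : (gsel (δ • x) * δ) • x ∈ V (nsel x) := by rw [mul_smul]; exact h1
      have h3 := (hgsel_mem x hx).2 _ h2
      rw [← h3, mul_inv_cancel_right]
    -- the coloring
    set f : X → ℕ := fun x => if x ∈ C then ω ((gsel x)⁻¹) else 0 with hfdef
    have hcol : ∀ x, x ∈ C → codingMap f x ∈ Ω := by
      intro x hx
      have hcm : codingMap f x = shift (gsel x)⁻¹ ω := by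
        funext γ
        show f (γ • x) = ω (γ * (gsel x)⁻¹)
        have hγx : γ • x ∈ C := hCinv γ x hx
        rw [hfdef]
        simp only [if_pos hγx]
        rw [hgsel_smul x hx γ, mul_inv_rev, inv_inv]
      rw [hcm]
      exact hΩ.2 _ ω hω
    -- Baire measurability
    have hEbm : ∀ n, BaireMeasurableSet (E n) := by
      intro n
      rw [hEdef]
      exact .iUnion fun γ => (((hVopen n).preimage (hcont γ)).baireMeasurableSet).inter
        (.iInter fun δ => .iInter fun _ =>
          (((hVopen n).preimage (hcont δ)).baireMeasurableSet).compl)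
    have hAset : ∀ γ : Γ, C ∩ {x | gsel x = γ} = C ∩ ⋃ n, ((E n ∩
        ⋂ m, ⋂ _ : m < n, (E m)ᶜ) ∩ (fun x => γ • x) ⁻¹' V n) := by
      intro γ
      ext x
      simp only [Set.mem_inter_iff, Set.mem_setOf_eq, Set.mem_iUnion, Set.mem_iInter,
        Set.mem_compl_iff, Set.mem_preimage]
      constructor
      · rintro ⟨hx, hg⟩
        obtain ⟨hxE, hmin⟩ := hnself x (hexE x hx)
        refine ⟨hx, nsel x, ⟨⟨hxE, fun m hm => hmin m hm⟩, ?_⟩⟩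
        rw [← hg]
        exact (hgsel_mem x hx).1
      · rintro ⟨hx, n, ⟨⟨hxE, hmin⟩, hγV⟩⟩
        refine ⟨hx, ?_⟩
        have h : ∃ m, x ∈ E m := hexE x hx
        have hn : nsel x = n := by
          rw [hnsel]
          simp only
          rw [dif_pos h]
          exact (Nat.find_eq_iff h).mpr ⟨hxE, fun m hm => hmin m hm⟩
        have := (hgsel_mem x hx).2 γ (by rw [hn]; exact hγV)
        exact this.symm
    have hbmf : BaireMFun f := by
      intro B hB
      rw [baireMSet_iff]
      have hsplit : f ⁻¹' B = (f ⁻¹' B ∩ Cᶜ) ∪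
          ⋃ γ : Γ, ⋃ _ : ω γ⁻¹ ∈ B, (C ∩ {x | gsel x = γ}) := by
        ext x
        simp only [Set.mem_union, Set.mem_inter_iff, Set.mem_preimage, Set.mem_compl_iff,
          Set.mem_iUnion, Set.mem_setOf_eq]
        constructor
        · intro hxB
          by_cases hx : x ∈ C
          · right
            refine ⟨gsel x, ?_, hx, rfl⟩
            have : f x = ω ((gsel x)⁻¹) := by rw [hfdef]; simp only [if_pos hx]
            rwa [this] at hxB
          · exact Or.inl ⟨hxB, hx⟩
        · rintro (⟨hxB, -⟩ | ⟨γ, hγB, hx, hg⟩)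
          · exact hxB
          · have : f x = ω ((gsel x)⁻¹) := by rw [hfdef]; simp only [if_pos hx]
            rw [this, hg]
            exact hγB
      rw [hsplit]
      have hCc : IsMeagre Cᶜ := by
        show Cᶜᶜ ∈ residual X
        rwa [compl_compl]
      refine BaireMeasurableSet.union ((hCc.mono Set.inter_subset_right).baireMeasurableSet) ?_
      refine .iUnion fun γ => .iUnion fun _ => ?_
      rw [hAset γ]
      exact (BaireMeasurableSet.of_mem_residual hCres).inter (.iUnion fun n =>
        ((hEbm n).inter (.iInter fun m => .iInter fun _ => (hEbm m).compl)).inter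
          ((hVopen n).preimage (hcont γ)).baireMeasurableSet)
    exact ⟨f, hbmf, Filter.mem_of_superset hCres fun x hx => hcol x hx⟩

end AuxProofs


end DescColor
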